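/- arXiv:2510.06789 — 2 statements merged into one kernel-verified Lean document; each statement's English description precedes it below -/
import Mathlib

section
/- The expected score function E L(π) = Σ_{i<j} c_{ij} (2p_{ij} − 1) · 1{π_i > π_j}, where all c_{ij} > 0, is uniquely maximized over permutations π at the true ranking π*, where π* is the permutation satisfying π*_i > π*_j iff p_{ij} > 1/2. -/
/-- Expected score of a ranking π: Σ_{i<j} c i j * (2 p i j - 1) * 1{π i > π j}. -/
noncomputable def expectedScore {n : ℕ} (p c : Fin n → Fin n → ℝ)
    (π : Equiv.Perm (Fin n)) : ℝ :=
  ∑ i : Fin n, ∑ j : Fin n, if i < j ∧ π j < π i then c i j * (2 * p i j - 1) else 0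

/-- The expected score is uniquely maximized at the true ranking π*. -/
theorem expectedScore_uniquely_maximized (n : ℕ) (hn : 0 < n)
    (p c : Fin n → Fin n → ℝ)
    (hsum : ∀ i j : Fin n, i ≠ j → p i j + p j i = 1)
    (hne : ∀ i j : Fin n, i ≠ j → p i j ≠ 1/2)
    (hWST : ∀ i j k : Fin n, i ≠ j → j ≠ k → i ≠ k →
      1/2 < p i j → 1/2 < p j k → 1/2 < p i k)
    (hc : ∀ i j : Fin n, i < j → 0 < c i j)
    (πstar : Equiv.Perm (Fin n))
    (hstar : ∀ i j : Fin n, i ≠ j → (πstar j < πstar i ↔ 1/2 < p i j)) :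
    ∀ π : Equiv.Perm (Fin n), π ≠ πstar →
      expectedScore p c π < expectedScore p c πstar := by
  intro π hπ
  classical
  -- pointwise domination of terms
  have key : ∀ i j : Fin n,
      (if i < j ∧ π j < π i then c i j * (2 * p i j - 1) else 0)
        ≤ (if i < j ∧ πstar j < πstar i then c i j * (2 * p i j - 1) else 0) := by
    intro i j
    by_cases hij : i < j
    · have hne' : i ≠ j := hij.ne
      have hcpos := hc i j hij
      rcases (hne i j hne').lt_or_gt with hp | hp
      · have h1 : ¬ (πstar j < πstar i) := by rw [hstar i j hne']; linarith
        simp only [hij, true_and, h1, if_false]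
        split
        · nlinarith
        · exact le_refl _
      · have h1 : πstar j < πstar i := (hstar i j hne').2 hp
        simp only [hij, true_and, h1, if_true]
        split
        · exact le_refl _
        · nlinarith
    · simp [hij]
  -- find a pair where orders differ
  have hpair : ∃ a b : Fin n, a < b ∧ ¬ ((π b < π a) ↔ (πstar b < πstar a)) := by
    by_contra hcon
    push_neg at hcon
    apply hπ
    have hiff : ∀ i j : Fin n, π i < π j ↔ πstar i < πstar j := by
      intro i j
      rcases lt_trichotomy i j with h | h | h
      · have h1 := hcon i j h
        have h2 : π i ≠ π j := fun e => h.ne (π.injective e)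
        have h3 : πstar i ≠ πstar j := fun e => h.ne (πstar.injective e)
        constructor
        · intro hlt
          rcases lt_or_gt_of_ne h3 with h4 | h4
          · exact h4
          · exact absurd (h1.2 h4) (not_lt.2 hlt.le)
        · intro hlt
          rcases lt_or_gt_of_ne h2 with h4 | h4
          · exact h4
          · exact absurd (h1.1 h4) (not_lt.2 hlt.le)
      · subst h; simp
      · have h1 := hcon j i h
        constructor
        · intro hlt; exact h1.1 hlt
        · intro hlt; exact h1.2 hlt
    -- the orders agree, so π = πstar
    have hmono : StrictMono (fun x => πstar (π⁻¹ x)) := by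
      intro x y hxy
      rw [← hiff]
      simpa using hxy
    have hid : StrictMono (id : Fin n → Fin n) := strictMono_id
    have hrange : Set.range (fun x => πstar (π⁻¹ x)) = Set.range (id : Fin n → Fin n) := by
      rw [Set.range_id, Set.range_eq_univ]
      exact fun y => ⟨π (πstar⁻¹ y), by simp⟩
    have inst : WellFoundedLT (Fin n) := inferInstance
    have heq : (fun x => πstar (π⁻¹ x)) = (id : Fin n → Fin n) :=
      (@StrictMono.range_inj (Fin n) (Fin n) _ _ inst _ _ hmono hid).1 hrange
    apply Equiv.ext
    intro x
    have := congrFun heq (π x)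
    simp only [Equiv.Perm.inv_def, Equiv.symm_apply_apply, id] at this
    exact this.symm
  obtain ⟨a, b, hab, hdiff⟩ := hpair
  -- strictness at the pair (a, b)
  have strict : (if a < b ∧ π b < π a then c a b * (2 * p a b - 1) else 0)
      < (if a < b ∧ πstar b < πstar a then c a b * (2 * p a b - 1) else 0) := by
    have hne' : a ≠ b := hab.ne
    have hcpos := hc a b hab
    rcases (hne a b hne').lt_or_gt with hp | hp
    · have h1 : ¬ (πstar b < πstar a) := by rw [hstar a b hne']; linarith
      have h2 : π b < π a := by tauto
      simp only [hab, true_and, h1, h2, if_false, if_true]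
      nlinarith
    · have h1 : πstar b < πstar a := (hstar a b hne').2 hp
      have h2 : ¬ (π b < π a) := by tauto
      simp only [hab, true_and, h1, h2, if_false, if_true]
      nlinarith
  unfold expectedScore
  refine Finset.sum_lt_sum (fun i _ => Finset.sum_le_sum fun j _ => key i j)
    ⟨a, Finset.mem_univ a, Finset.sum_lt_sum (fun j _ => key a j)
      ⟨b, Finset.mem_univ b, strict⟩⟩
end

section
/- For 1 ≤ r ≤ n(n−1)/2, the number of permutations π of {1,...,n} with at most r inversions is at most the binomial coefficient C(n + r − 1, n − 1). -/
open Finset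

def inversions {n : ℕ} (π : Equiv.Perm (Fin n)) : ℕ :=
  (Finset.univ.filter (fun q : Fin n × Fin n => q.1 < q.2 ∧ π q.2 < π q.1)).card

namespace KendallAux

def code {n : ℕ} (π : Equiv.Perm (Fin n)) (i : Fin n) : ℕ :=
  (Finset.univ.filter (fun j : Fin n => i < j ∧ π j < π i)).card

lemma sum_code {n : ℕ} (π : Equiv.Perm (Fin n)) : ∑ i, code π i = inversions π := by
  unfold inversions code
  simp only [Finset.card_filter]
  rw [← Finset.univ_product_univ, Finset.sum_product]

def g {n : ℕ} (S : Finset (Fin n)) (v : Fin n) : ℕ :=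
  (Finset.univ.filter (fun u : Fin n => u < v ∧ u ∉ S)).card

lemma g_inj {n : ℕ} (S : Finset (Fin n)) {v w : Fin n} (hv : v ∉ S) (hw : w ∉ S)
    (h : g S v = g S w) : v = w := by
  rcases lt_trichotomy v w with hlt | he | hlt
  · exfalso
    have hss : (Finset.univ.filter (fun u : Fin n => u < v ∧ u ∉ S)) ⊂
        (Finset.univ.filter (fun u : Fin n => u < w ∧ u ∉ S)) := by
      constructor
      · intro u hu
        simp only [mem_filter, mem_univ, true_and] at hu ⊢
        exact ⟨hu.1.trans hlt, hu.2⟩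
      · intro hsub
        have := hsub (by simp [hlt, hv] : v ∈ _)
        simp at this
    exact absurd h (Nat.ne_of_lt (Finset.card_lt_card hss))
  · exact he
  · exfalso
    have hss : (Finset.univ.filter (fun u : Fin n => u < w ∧ u ∉ S)) ⊂
        (Finset.univ.filter (fun u : Fin n => u < v ∧ u ∉ S)) := by
      constructor
      · intro u hu
        simp only [mem_filter, mem_univ, true_and] at hu ⊢
        exact ⟨hu.1.trans hlt, hu.2⟩
      · intro hsub
        have := hsub (by simp [hlt, hw] : w ∈ _)
        simp at this
    exact absurd h.symm (Nat.ne_of_lt (Finset.card_lt_card hss))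

lemma code_eq_g {n : ℕ} (π : Equiv.Perm (Fin n)) (i : Fin n) :
    code π i = g ((Finset.univ.filter (fun j : Fin n => j < i)).image π) (π i) := by
  unfold code g
  apply Finset.card_bij (fun j _ => π j)
  · intro j hj
    simp only [mem_filter, mem_univ, true_and] at hj ⊢
    refine ⟨hj.2, ?_⟩
    simp only [Finset.mem_image, mem_filter, mem_univ, true_and]
    rintro ⟨k, hk, hkj⟩
    have : k = j := π.injective hkj
    omega
  · intro a ha b hb hab
    exact π.injective hab
  · intro u hu
    simp only [mem_filter, mem_univ, true_and, Finset.mem_image] at hu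
    refine ⟨π.symm u, ?_, by simp⟩
    simp only [mem_filter, mem_univ, true_and]
    have h1 : ¬ (π.symm u < i) := by
      intro hlt
      exact hu.2 ⟨π.symm u, by simp [hlt]⟩
    have h2 : π.symm u ≠ i := by
      intro he
      rw [← he] at hu
      simp at hu
    constructor
    · rcases lt_trichotomy i (π.symm u) with h | h | h
      · exact h
      · exact absurd h.symm h2
      · exact absurd h h1
    · simpa using hu.1

lemma code_injective {n : ℕ} {π τ : Equiv.Perm (Fin n)} (h : code π = code τ) : π = τ := by
  have key : ∀ m : ℕ, ∀ i : Fin n, (i : ℕ) = m → π i = τ i := by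
    intro m
    induction m using Nat.strong_induction_on with
    | _ m IH =>
      intro i hi
      have hS : (Finset.univ.filter (fun j : Fin n => j < i)).image π =
          (Finset.univ.filter (fun j : Fin n => j < i)).image τ := by
        apply Finset.image_congr
        intro j hj
        simp only [Set.mem_setOf_eq, coe_filter, mem_univ, true_and] at hj
        exact IH (j : ℕ) (by omega) j rfl
      have hπ : π i ∉ (Finset.univ.filter (fun j : Fin n => j < i)).image π := by
        simp only [Finset.mem_image, mem_filter, mem_univ, true_and]
        rintro ⟨k, hk, hki⟩
        have : k = i := π.injective hki
        omega
      have hτ : τ i ∉ (Finset.univ.filter (fun j : Fin n => j < i)).image π := by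
        rw [hS]
        simp only [Finset.mem_image, mem_filter, mem_univ, true_and]
        rintro ⟨k, hk, hki⟩
        have : k = i := τ.injective hki
        omega
      apply g_inj _ hπ hτ
      rw [← code_eq_g]
      conv_rhs => rw [hS, ← code_eq_g]
      rw [h]
  exact Equiv.ext fun i => key (i : ℕ) i rfl

end KendallAux

open KendallAux in
/-- The number of permutations with at most r inversions is at most C(n+r−1, n−1). -/
theorem card_kendall_ball_le (n r : ℕ) (hr1 : 1 ≤ r) (hr2 : r ≤ n * (n - 1) / 2) :
    (Finset.univ.filter (fun π : Equiv.Perm (Fin n) => inversions π ≤ r)).card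
      ≤ Nat.choose (n + r - 1) (n - 1) := by
  have hn : 2 ≤ n := by
    rcases n with _ | _ | n
    · simp at hr2; omega
    · simp at hr2; omega
    · omega
  set last : Fin n := ⟨n - 1, by omega⟩ with hlast
  have code_last : ∀ π : Equiv.Perm (Fin n), code π last = 0 := by
    intro π
    unfold code
    rw [Finset.card_eq_zero, Finset.filter_eq_empty_iff]
    intro j _
    rintro ⟨hj, -⟩
    rw [Fin.lt_def] at hj
    have := j.isLt
    simp only [hlast] at hj
    omega
  -- the multiset map
  set m : Equiv.Perm (Fin n) → Multiset (Fin n) :=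
    fun π => (∑ i : Fin n, (code π i) • ({i} : Multiset (Fin n)))
      + (r - inversions π) • ({last} : Multiset (Fin n)) with hm
  have count_m : ∀ π a, Multiset.count a (m π) =
      code π a + (r - inversions π) * (if a = last then 1 else 0) := by
    intro π a
    simp only [hm, Multiset.count_add, Multiset.count_nsmul, Multiset.count_singleton]
    congr 1
    rw [Multiset.count_sum']
    simp [Multiset.count_nsmul, Multiset.count_singleton]
  have card_m : ∀ π : Equiv.Perm (Fin n), inversions π ≤ r → Multiset.card (m π) = r := by
    intro π hπ
    rw [← Multiset.sum_count_eq_card (s := Finset.univ) (m := m π) (fun a _ => Finset.mem_univ a)]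
    simp only [count_m, mul_ite, mul_one, mul_zero]
    rw [Finset.sum_add_distrib, sum_code,
      Finset.sum_ite_eq' Finset.univ last (fun _ => r - inversions π)]
    simp only [Finset.mem_univ, if_true]
    omega
  have hf : ∀ π : Equiv.Perm (Fin n), inversions π ≤ r → Multiset.card (m π) = r := card_m
  classical
  let f : Equiv.Perm (Fin n) → Sym (Fin n) r :=
    fun π => if h : inversions π ≤ r then ⟨m π, card_m π h⟩ else Sym.replicate r last
  have hcard : (Finset.univ.filter (fun π : Equiv.Perm (Fin n) => inversions π ≤ r)).card
      ≤ Fintype.card (Sym (Fin n) r) := by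
    rw [← Finset.card_univ]
    apply Finset.card_le_card_of_injOn f (fun _ _ => Finset.mem_univ _)
    intro π hπ τ hτ hfe
    simp only [coe_filter, Set.mem_setOf_eq, mem_univ, true_and] at hπ hτ
    simp only [f, dif_pos hπ, dif_pos hτ] at hfe
    have hme : m π = m τ := by simpa [hπ, hτ] using congrArg Subtype.val hfe
    have hcode : code π = code τ := by
      funext a
      by_cases ha : a = last
      · rw [ha, code_last, code_last]
      · have := congrArg (Multiset.count a) hme
        rw [count_m, count_m, if_neg ha] at this
        simpa using this
    exact code_injective hcode
  calc (Finset.univ.filter (fun π : Equiv.Perm (Fin n) => inversions π ≤ r)).card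
      ≤ Fintype.card (Sym (Fin n) r) := hcard
    _ = (n + r - 1).choose r := by
        rw [Sym.card_sym_eq_choose, Fintype.card_fin]
    _ = (n + r - 1).choose (n - 1) := by
        have h1 : n - 1 = (n + r - 1) - r := by omega
        rw [h1, Nat.choose_symm (by omega)]
end
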